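/- Let A be a real symmetric positive semidefinite d×d matrix with ‖A‖_F ≤ r. Let D = (z_1, …, z_n) and D^i = (z_1, …, z_{i−1}, z_i', z_{i+1}, …, z_n) be two datasets differing only in the i-th point, where all points z = (x, y) involved satisfy ‖x‖₂ ≤ R and any two of them satisfy 0 ≤ ⟨y, y'⟩ ≤ L̄. Then |L̂(A; D) − L̂(A; D^i)| ≤ 4(L̄² + r² R⁴)/n. -/

import Mathlib

open MeasureTheory Finset
open scoped ENNReal

noncomputable section

/-- A labeled data point z = (x, y) ∈ ℝ^d × ℝ^L. -/
abbrev Pt (d L : ℕ) := (Fin d → ℝ) × (Fin L → ℝ)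

/-- Inner product ⟨y, y'⟩ of label vectors. -/
def ipY {L : ℕ} (y y' : Fin L → ℝ) : ℝ := ∑ i, y i * y' i

/-- Bilinear form xᵀ A x'. -/
def qForm {d : ℕ} (A : Matrix (Fin d) (Fin d) ℝ) (x x' : Fin d → ℝ) : ℝ :=
  ∑ i, ∑ j, x i * A i j * x' j

/-- Euclidean norm ‖x‖₂. -/
def norm2 {d : ℕ} (x : Fin d → ℝ) : ℝ := Real.sqrt (∑ i, x i ^ 2)

/-- Frobenius norm ‖A‖_F. -/
def frobNorm {d : ℕ} (A : Matrix (Fin d) (Fin d) ℝ) : ℝ :=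
  Real.sqrt (∑ i, ∑ j, (A i j) ^ 2)

/-- Loss ℓ(A; z, z') := g(⟨y, y'⟩)·(⟨y, y'⟩ − xᵀ A x')² + λ·Tr(A). -/
def lossFn {d L : ℕ} (g : ℝ → ℝ) (lam : ℝ) (A : Matrix (Fin d) (Fin d) ℝ)
    (z z' : Pt d L) : ℝ :=
  g (ipY z.2 z'.2) * (ipY z.2 z'.2 - qForm A z.1 z'.1) ^ 2 + lam * A.trace

/-- Empirical risk L̂(A; D) := (1/(n(n−1))) Σᵢ Σ_{j≠i} ℓ(A; zᵢ, zⱼ). -/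
def empRisk {d L : ℕ} (g : ℝ → ℝ) (lam : ℝ) {n : ℕ} (A : Matrix (Fin d) (Fin d) ℝ)
    (D : Fin n → Pt d L) : ℝ :=
  (1 / ((n : ℝ) * ((n : ℝ) - 1))) * ∑ i, ∑ j ∈ univ.erase i, lossFn g lam A (D i) (D j)

/-- Population risk L(A) := E_{z,z' i.i.d. ∼ P}[ℓ(A; z, z')]. -/
def popRisk {d L : ℕ} (g : ℝ → ℝ) (lam : ℝ) (P : Measure (Pt d L))
    (A : Matrix (Fin d) (Fin d) ℝ) : ℝ :=
  ∫ z, (∫ z', lossFn g lam A z z' ∂P) ∂P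

/-- Risk relative to the training set, L̃(A; D) := (1/n) Σₖ E_{z∼P}[ℓ(A; z, zₖ)]. -/
def tilRisk {d L : ℕ} (g : ℝ → ℝ) (lam : ℝ) (P : Measure (Pt d L)) {n : ℕ}
    (A : Matrix (Fin d) (Fin d) ℝ) (D : Fin n → Pt d L) : ℝ :=
  (1 / (n : ℝ)) * ∑ k, ∫ z, lossFn g lam A z (D k) ∂P

/-- Law of a Rademacher random variable: uniform on {−1, +1}. -/
def radMeasure : Measure ℝ :=
  (2⁻¹ : ℝ≥0∞) • Measure.dirac (-1) + (2⁻¹ : ℝ≥0∞) • Measure.dirac 1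


theorem stmt2 {d L : ℕ} {lam r R Lbar : ℝ} (hlam : 0 < lam) (hr : 0 < r) (hR : 0 < R)
    (hLbar : 0 ≤ Lbar)
    (g : ℝ → ℝ) (hg : ∀ t, 0 ≤ g t ∧ g t ≤ 1)
    (A : Matrix (Fin d) (Fin d) ℝ) (hA : A.PosSemidef) (hAr : frobNorm A ≤ r)
    {n : ℕ} (hn : 2 ≤ n) (i : Fin n) (D D' : Fin n → Pt d L)
    (hdiff : ∀ j : Fin n, j ≠ i → D j = D' j)
    (hx : ∀ z ∈ Set.range D ∪ Set.range D', norm2 z.1 ≤ R)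
    (hy : ∀ z ∈ Set.range D ∪ Set.range D', ∀ z' ∈ Set.range D ∪ Set.range D',
      0 ≤ ipY z.2 z'.2 ∧ ipY z.2 z'.2 ≤ Lbar) :
    |empRisk g lam A D - empRisk g lam A D'| ≤
      4 * (Lbar ^ 2 + r ^ 2 * R ^ 4) / n := by
  set S := Set.range D ∪ Set.range D' with hS
  set C := 2 * (Lbar ^ 2 + r ^ 2 * R ^ 4) with hC
  have hCnn : 0 ≤ C := by positivity
  -- bound on the quadratic form
  have hq : ∀ x x' : Fin d → ℝ, norm2 x ≤ R → norm2 x' ≤ R →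
      (qForm A x x') ^ 2 ≤ r ^ 2 * R ^ 4 := by
    intro x x' hx1 hx2
    have hsum : ∀ v : Fin d → ℝ, norm2 v ≤ R → ∑ k, v k ^ 2 ≤ R ^ 2 := by
      intro v hv
      unfold norm2 at hv
      have h0 : (0:ℝ) ≤ ∑ k, v k ^ 2 := Finset.sum_nonneg fun _ _ => sq_nonneg _
      nlinarith [Real.sq_sqrt h0, Real.sqrt_nonneg (∑ k, v k ^ 2), hv]
    have hA2 : ∑ p : Fin d × Fin d, (A p.1 p.2) ^ 2 ≤ r ^ 2 := by
      have h0 : (0:ℝ) ≤ ∑ l, ∑ j, (A l j) ^ 2 :=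
        Finset.sum_nonneg fun _ _ => Finset.sum_nonneg fun _ _ => sq_nonneg _
      have h1 : ∑ p : Fin d × Fin d, (A p.1 p.2) ^ 2 = ∑ l, ∑ j, (A l j) ^ 2 :=
        Fintype.sum_prod_type _
      rw [h1]
      have := Real.sq_sqrt h0
      unfold frobNorm at hAr
      nlinarith [Real.sqrt_nonneg (∑ l, ∑ j, (A l j) ^ 2)]
    have hrw : qForm A x x' = ∑ p : Fin d × Fin d, (x p.1 * x' p.2) * A p.1 p.2 := by
      unfold qForm
      rw [Fintype.sum_prod_type]
      exact Finset.sum_congr rfl fun l _ => Finset.sum_congr rfl fun j _ => by ring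
    have hcs := Finset.sum_mul_sq_le_sq_mul_sq Finset.univ
      (fun p : Fin d × Fin d => x p.1 * x' p.2) (fun p => A p.1 p.2)
    have hf2 : ∑ p : Fin d × Fin d, (x p.1 * x' p.2) ^ 2
        = (∑ k, x k ^ 2) * (∑ k, x' k ^ 2) := by
      rw [Finset.sum_mul_sum, ← Finset.univ_product_univ, Finset.sum_product]
      exact Finset.sum_congr rfl fun l _ => Finset.sum_congr rfl fun j _ => by ring
    have hX := hsum x hx1
    have hX' := hsum x' hx2
    have hxnn : (0:ℝ) ≤ ∑ k, x k ^ 2 := Finset.sum_nonneg fun _ _ => sq_nonneg _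
    have hx'nn : (0:ℝ) ≤ ∑ k, x' k ^ 2 := Finset.sum_nonneg fun _ _ => sq_nonneg _
    have hA2nn : (0:ℝ) ≤ ∑ p : Fin d × Fin d, (A p.1 p.2) ^ 2 :=
      Finset.sum_nonneg fun _ _ => sq_nonneg _
    rw [hrw]
    calc (∑ p : Fin d × Fin d, (x p.1 * x' p.2) * A p.1 p.2) ^ 2
        ≤ (∑ p : Fin d × Fin d, (x p.1 * x' p.2) ^ 2) *
            ∑ p : Fin d × Fin d, (A p.1 p.2) ^ 2 := hcs
      _ = (∑ k, x k ^ 2) * (∑ k, x' k ^ 2) * ∑ p : Fin d × Fin d, (A p.1 p.2) ^ 2 := by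
          rw [hf2]
      _ ≤ r ^ 2 * R ^ 4 := by
          have h1 : (∑ k, x k ^ 2) * (∑ k, x' k ^ 2) ≤ R ^ 2 * R ^ 2 :=
            mul_le_mul hX hX' hx'nn (by positivity)
          have h2 : (∑ k, x k ^ 2) * (∑ k, x' k ^ 2) * (∑ p : Fin d × Fin d, (A p.1 p.2) ^ 2)
              ≤ R ^ 2 * R ^ 2 * r ^ 2 :=
            mul_le_mul h1 hA2 hA2nn (by positivity)
          nlinarith [h2]
  -- each loss value lies in [λ Tr A, λ Tr A + C]
  have hlmem : ∀ z ∈ S, ∀ z' ∈ S,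
      0 ≤ g (ipY z.2 z'.2) * (ipY z.2 z'.2 - qForm A z.1 z'.1) ^ 2 ∧
      g (ipY z.2 z'.2) * (ipY z.2 z'.2 - qForm A z.1 z'.1) ^ 2 ≤ C := by
    intro z hz z' hz'
    obtain ⟨hip0, hipL⟩ := hy z hz z' hz'
    have hqb := hq z.1 z'.1 (hx z hz) (hx z' hz')
    have hsb : (ipY z.2 z'.2 - qForm A z.1 z'.1) ^ 2 ≤ C := by
      rw [hC]
      nlinarith [sq_nonneg (ipY z.2 z'.2 + qForm A z.1 z'.1), hqb, hip0, hipL, hLbar]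
    obtain ⟨hg0, hg1⟩ := hg (ipY z.2 z'.2)
    constructor
    · exact mul_nonneg hg0 (sq_nonneg _)
    · calc g (ipY z.2 z'.2) * (ipY z.2 z'.2 - qForm A z.1 z'.1) ^ 2
          ≤ 1 * (ipY z.2 z'.2 - qForm A z.1 z'.1) ^ 2 :=
            mul_le_mul_of_nonneg_right hg1 (sq_nonneg _)
        _ ≤ C := by linarith
  -- difference of two losses is bounded by C
  have hloss : ∀ z ∈ S, ∀ z' ∈ S, ∀ w ∈ S, ∀ w' ∈ S,
      |lossFn g lam A z z' - lossFn g lam A w w'| ≤ C := by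
    intro z hz z' hz' w hw w' hw'
    obtain ⟨ha0, haC⟩ := hlmem z hz z' hz'
    obtain ⟨hb0, hbC⟩ := hlmem w hw w' hw'
    unfold lossFn
    rw [abs_sub_le_iff]
    constructor <;> linarith
  have hmemD : ∀ j, D j ∈ S := fun j => Or.inl ⟨j, rfl⟩
  have hmemD' : ∀ j, D' j ∈ S := fun j => Or.inr ⟨j, rfl⟩
  -- per-term bound
  have hterm : ∀ j k : Fin n, k ≠ j →
      |lossFn g lam A (D j) (D k) - lossFn g lam A (D' j) (D' k)| ≤
        (if j = i ∨ k = i then C else 0) := by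
    intro j k _
    by_cases hjk : j = i ∨ k = i
    · rw [if_pos hjk]
      exact hloss _ (hmemD j) _ (hmemD k) _ (hmemD' j) _ (hmemD' k)
    · push_neg at hjk
      rw [if_neg (by push_neg; exact hjk), hdiff j hjk.1, hdiff k hjk.2,
        sub_self, abs_zero]
  have hn1 : (1:ℝ) ≤ (n:ℝ) := by exact_mod_cast Nat.one_le_of_lt hn
  have hn0 : (0:ℝ) < (n:ℝ) := by linarith
  have hnm1 : (0:ℝ) < (n:ℝ) - 1 := by
    have : (2:ℝ) ≤ (n:ℝ) := by exact_mod_cast hn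
    linarith
  have hcard : ∀ j : Fin n, ((Finset.univ.erase j).card : ℝ) = (n:ℝ) - 1 := by
    intro j
    rw [Finset.card_erase_of_mem (Finset.mem_univ j), Finset.card_univ, Fintype.card_fin]
    rw [Nat.cast_sub (Nat.one_le_of_lt hn), Nat.cast_one]
  -- the double sum of bounds
  have hsumbnd : ∑ j, ∑ k ∈ Finset.univ.erase j, (if j = i ∨ k = i then C else 0)
      = 2 * ((n:ℝ) - 1) * C := by
    rw [← Finset.add_sum_erase Finset.univ _ (Finset.mem_univ i)]
    have h1 : ∑ k ∈ Finset.univ.erase i, (if i = i ∨ k = i then C else 0)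
        = ((n:ℝ) - 1) * C := by
      rw [Finset.sum_congr rfl (fun k _ => if_pos (Or.inl rfl)), Finset.sum_const,
        nsmul_eq_mul, hcard]
    have h2 : ∀ j ∈ Finset.univ.erase i,
        ∑ k ∈ Finset.univ.erase j, (if j = i ∨ k = i then C else 0) = C := by
      intro j hj
      have hji : j ≠ i := (Finset.mem_erase.mp hj).1
      have heq : ∀ k ∈ Finset.univ.erase j, (if j = i ∨ k = i then C else 0)
          = (if k = i then C else 0) := by
        intro k _
        by_cases hk : k = i
        · rw [if_pos (Or.inr hk), if_pos hk]
        · rw [if_neg (by push_neg; exact ⟨hji, hk⟩), if_neg hk]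
      rw [Finset.sum_congr rfl heq]
      rw [Finset.sum_ite_eq' (Finset.univ.erase j) i (fun _ => C),
        if_pos (Finset.mem_erase.mpr ⟨Ne.symm hji, Finset.mem_univ i⟩)]
    rw [h1, Finset.sum_congr rfl h2, Finset.sum_const, nsmul_eq_mul, hcard]
    ring
  -- main estimate
  have hsplit : empRisk g lam A D - empRisk g lam A D'
      = (1 / ((n:ℝ) * ((n:ℝ) - 1))) *
        ∑ j, ∑ k ∈ Finset.univ.erase j,
          (lossFn g lam A (D j) (D k) - lossFn g lam A (D' j) (D' k)) := by
    unfold empRisk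
    rw [← mul_sub, ← Finset.sum_sub_distrib]
    congr 1
    exact Finset.sum_congr rfl fun j _ => (Finset.sum_sub_distrib _ _).symm
  rw [hsplit, abs_mul]
  have hcpos : (0:ℝ) < (n:ℝ) * ((n:ℝ) - 1) := mul_pos hn0 hnm1
  have habs1 : |1 / ((n:ℝ) * ((n:ℝ) - 1))| = 1 / ((n:ℝ) * ((n:ℝ) - 1)) :=
    abs_of_pos (by positivity)
  rw [habs1]
  have hsum_le : |∑ j, ∑ k ∈ Finset.univ.erase j,
      (lossFn g lam A (D j) (D k) - lossFn g lam A (D' j) (D' k))|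
      ≤ 2 * ((n:ℝ) - 1) * C := by
    calc _ ≤ ∑ j, |∑ k ∈ Finset.univ.erase j,
          (lossFn g lam A (D j) (D k) - lossFn g lam A (D' j) (D' k))| :=
        Finset.abs_sum_le_sum_abs _ _
      _ ≤ ∑ j, ∑ k ∈ Finset.univ.erase j,
          |lossFn g lam A (D j) (D k) - lossFn g lam A (D' j) (D' k)| :=
        Finset.sum_le_sum fun j _ => Finset.abs_sum_le_sum_abs _ _
      _ ≤ ∑ j, ∑ k ∈ Finset.univ.erase j, (if j = i ∨ k = i then C else 0) :=
        Finset.sum_le_sum fun j _ => Finset.sum_le_sum fun k hk =>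
          hterm j k (Finset.mem_erase.mp hk).1
      _ = 2 * ((n:ℝ) - 1) * C := hsumbnd
  calc (1 / ((n:ℝ) * ((n:ℝ) - 1))) * |∑ j, ∑ k ∈ Finset.univ.erase j,
        (lossFn g lam A (D j) (D k) - lossFn g lam A (D' j) (D' k))|
      ≤ (1 / ((n:ℝ) * ((n:ℝ) - 1))) * (2 * ((n:ℝ) - 1) * C) :=
        mul_le_mul_of_nonneg_left hsum_le (by positivity)
    _ = 4 * (Lbar ^ 2 + r ^ 2 * R ^ 4) / n := by
        rw [hC]
        field_simp
        ring

end
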